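/- Let s_i, s_j be points in the plane with ‖s_i‖ ≥ ‖s_j‖ > 3, and let u_i be a point with ‖u_i‖ ≤ 1 such that dist(s_i, s_j) ≥ dist(s_i, u_i). Then the radial projections s'_i = 3 s_i/‖s_i‖ and s'_j = 3 s_j/‖s_j‖ satisfy dist(s'_i, s'_j) ≥ 2. -/

import Mathlib

theorem stmt_13 (si sj ui : EuclideanSpace ℝ (Fin 2))
    (hj : ‖sj‖ > 3) (hij : ‖si‖ ≥ ‖sj‖) (hu : ‖ui‖ ≤ 1)
    (h : dist si sj ≥ dist si ui) :
    dist ((3 / ‖si‖) • si) ((3 / ‖sj‖) • sj) ≥ 2 := by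
  set a := ‖si‖ with ha
  set b := ‖sj‖ with hb
  have ha3 : a > 3 := lt_of_lt_of_le hj hij
  have hapos : (0:ℝ) < a := by linarith
  have hbpos : (0:ℝ) < b := by linarith
  set t : ℝ := inner ℝ si sj with ht
  -- dist si ui ≥ a - 1
  have h1 : dist si ui ≥ a - 1 := by
    have := norm_sub_norm_le si ui
    rw [dist_eq_norm]
    linarith
  have h2 : dist si sj ≥ a - 1 := le_trans h1 h
  have hsq : (dist si sj)^2 = a^2 - 2*t + b^2 := by
    rw [dist_eq_norm, @norm_sub_sq_real]
  have h3 : (a-1)^2 ≤ (dist si sj)^2 := by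
    have : (0:ℝ) ≤ a - 1 := by linarith
    nlinarith
  have ht2 : 2*t ≤ b^2 + 2*a - 1 := by nlinarith
  set d := dist ((3 / a) • si) ((3 / b) • sj) with hd
  have hd0 : d ≥ 0 := dist_nonneg
  have hdsq : d^2 = 9 - 2*((3/a)*(3/b)*t) + 9 := by
    rw [hd, dist_eq_norm, @norm_sub_sq_real, real_inner_smul_left,
      real_inner_smul_right, norm_smul, norm_smul]
    have e1 : ‖(3:ℝ)/a‖ = 3/a := by
      rw [Real.norm_eq_abs, abs_of_pos (by positivity)]
    have e2 : ‖(3:ℝ)/b‖ = 3/b := by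
      rw [Real.norm_eq_abs, abs_of_pos (by positivity)]
    rw [e1, e2]
    have htc : t = si 0 * sj 0 + si 1 * sj 1 := by
      simp [ht, PiLp.inner_apply, Fin.sum_univ_two, RCLike.inner_apply, mul_comm]
    field_simp
    rw [← ha, ← hb, ← ht, htc]; ring
  have hdsq' : d^2 * (a*b) = 18*(a*b) - 18*t := by
    rw [hdsq]; field_simp; ring
  -- 18*t ≤ 14*a*b
  have key : 18*t ≤ 14*(a*b) := by nlinarith [mul_pos hapos hbpos, sq_nonneg (b-3)]
  have hd4 : d^2 ≥ 4 := by
    have hab : (0:ℝ) < a*b := mul_pos hapos hbpos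
    nlinarith
  nlinarith
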